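/- Let A be a commutative ring graded by a finite abelian group Γ via (B_γ)_{γ∈Γ}, and suppose that the additive group of A has no nonzero #Γ-torsion (i.e., (#Γ)x = 0 implies x = 0). Then the nilradical of A is a homogeneous ideal: if α = ∑_γ α_γ with α_γ ∈ B_γ is nilpotent, then each α_γ is nilpotent. -/

import Mathlib

/-- A `Γ`-grading of a commutative ring `A`: a family of additive subgroups
`B γ` with `B γ * B δ ⊆ B (γ*δ)` such that every element of `A` has a unique
finitely-supported decomposition into homogeneous components. -/
def IsGrading {A Γ : Type*} [CommRing A] [CommGroup Γ] (B : Γ → AddSubgroup A) : Prop :=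
  (∀ γ δ : Γ, ∀ x ∈ B γ, ∀ y ∈ B δ, x * y ∈ B (γ * δ)) ∧
  (∀ a : A, ∃! f : Γ →₀ A, (∀ γ, f γ ∈ B γ) ∧ f.sum (fun _ x => x) = a)


open scoped TensorProduct

namespace GradingAux

variable {A Γ : Type*} [CommRing A] [CommGroup Γ] {B : Γ → AddSubgroup A}

noncomputable def d (hB : IsGrading B) (a : A) : Γ →₀ A := (hB.2 a).exists.choose

lemma d_spec (hB : IsGrading B) (a : A) :
    (∀ γ, d hB a γ ∈ B γ) ∧ (d hB a).sum (fun _ x => x) = a :=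
  (hB.2 a).exists.choose_spec

lemma d_eq (hB : IsGrading B) {a : A} {g : Γ →₀ A} (h1 : ∀ γ, g γ ∈ B γ)
    (h2 : g.sum (fun _ x => x) = a) : d hB a = g :=
  (hB.2 a).unique (d_spec hB a) ⟨h1, h2⟩

lemma d_zero (hB : IsGrading B) : d hB (0 : A) = 0 :=
  d_eq hB (fun γ => (B γ).zero_mem) (by simp)

lemma d_mul (hB : IsGrading B) (a b : A) :
    d hB (a * b) = (d hB a).sum fun δ x => (d hB b).sum fun ε y =>
      Finsupp.single (δ * ε) (x * y) := by
  classical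
  refine d_eq hB ?_ ?_
  · intro γ
    simp only [Finsupp.sum_apply]
    refine AddSubgroup.sum_mem _ fun δ hδ => ?_
    refine AddSubgroup.sum_mem _ fun ε hε => ?_
    simp only [Finsupp.single_apply]
    split_ifs with h
    · exact h ▸ hB.1 δ ε _ ((d_spec hB a).1 δ) _ ((d_spec hB b).1 ε)
    · exact (B γ).zero_mem
  · rw [Finsupp.sum_sum_index (fun _ => rfl) (fun _ _ _ => rfl)]
    calc ((d hB a).sum fun δ x => ((d hB b).sum fun ε y =>
            (Finsupp.single (δ * ε) (x * y))).sum fun _ z => z)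
        = (d hB a).sum fun _ x => x * b := by
          refine Finsupp.sum_congr fun δ hδ => ?_
          rw [Finsupp.sum_sum_index (fun _ => rfl) (fun _ _ _ => rfl)]
          calc ((d hB b).sum fun ε y => (Finsupp.single (δ * ε) ((d hB a) δ * y)).sum fun _ z => z)
              = (d hB b).sum fun ε y => (d hB a) δ * y :=
                Finsupp.sum_congr fun ε hε => Finsupp.sum_single_index rfl
            _ = (d hB a) δ * b := by rw [← Finsupp.mul_sum, (d_spec hB b).2]
      _ = a * b := by rw [← Finsupp.sum_mul, (d_spec hB a).2]

variable (R : Type*) [CommRing R]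

noncomputable def F (hB : IsGrading B) (χ : Γ →* Rˣ) (a : A) : A ⊗[ℤ] R :=
  (d hB a).sum fun γ x => x ⊗ₜ[ℤ] ((χ γ : Rˣ) : R)

lemma F_zero (hB : IsGrading B) (χ : Γ →* Rˣ) : F R hB χ 0 = 0 := by
  rw [F, d_zero, Finsupp.sum_zero_index]

lemma F_mul (hB : IsGrading B) (χ : Γ →* Rˣ) (a b : A) :
    F R hB χ (a * b) = F R hB χ a * F R hB χ b := by
  rw [F, d_mul, Finsupp.sum_sum_index (fun _ => by simp)
    (fun _ x y => by rw [TensorProduct.add_tmul])]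
  calc ((d hB a).sum fun δ x => ((d hB b).sum fun ε y =>
          (Finsupp.single (δ * ε) (x * y))).sum fun γ z => z ⊗ₜ[ℤ] ((χ γ : Rˣ) : R))
      = (d hB a).sum fun δ x => (x ⊗ₜ[ℤ] ((χ δ : Rˣ) : R)) * F R hB χ b := by
        refine Finsupp.sum_congr fun δ hδ => ?_
        rw [Finsupp.sum_sum_index (fun _ => by simp)
          (fun _ x y => by rw [TensorProduct.add_tmul])]
        calc ((d hB b).sum fun ε y => (Finsupp.single (δ * ε) ((d hB a) δ * y)).sum
                fun γ z => z ⊗ₜ[ℤ] ((χ γ : Rˣ) : R))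
            = (d hB b).sum fun ε y =>
                ((d hB a) δ ⊗ₜ[ℤ] ((χ δ : Rˣ) : R)) * (y ⊗ₜ[ℤ] ((χ ε : Rˣ) : R)) := by
              refine Finsupp.sum_congr fun ε hε => ?_
              rw [Finsupp.sum_single_index (by simp),
                Algebra.TensorProduct.tmul_mul_tmul, ← Units.val_mul, ← map_mul]
          _ = ((d hB a) δ ⊗ₜ[ℤ] ((χ δ : Rˣ) : R)) * F R hB χ b := by
              rw [F, ← Finsupp.mul_sum]
    _ = F R hB χ a * F R hB χ b := by conv_rhs => rw [F, Finsupp.sum_mul]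

lemma F_pow (hB : IsGrading B) (χ : Γ →* Rˣ) (a : A) :
    ∀ k : ℕ, F R hB χ (a ^ (k + 1)) = (F R hB χ a) ^ (k + 1) := by
  intro k
  induction k with
  | zero => rw [pow_one, pow_one]
  | succ k ih => rw [pow_succ a, F_mul, ih, ← pow_succ]

lemma sum_char_eq_card {Γ R : Type*} [CommGroup Γ] [Fintype Γ] [CommRing R]
    [Fintype (Γ →* Rˣ)] (hcard : Fintype.card (Γ →* Rˣ) = Fintype.card Γ) :
    ∑ χ : Γ →* Rˣ, ((χ (1 : Γ) : Rˣ) : R) = (Fintype.card Γ : R) := by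
  simp only [map_one, Units.val_one]
  rw [Finset.sum_const, Finset.card_univ, hcard, nsmul_eq_mul, mul_one]

lemma sum_char_eq_zero {Γ R : Type*} [CommGroup Γ] [Fintype Γ] [CommRing R] [IsDomain R]
    [Fintype (Γ →* Rˣ)] {g : Γ} (hsep : ∃ χ : Γ →* Rˣ, χ g ≠ 1) :
    ∑ χ : Γ →* Rˣ, ((χ g : Rˣ) : R) = 0 := by
  obtain ⟨χ₀, hχ₀⟩ := hsep
  have key : ((χ₀ g : Rˣ) : R) * ∑ χ : Γ →* Rˣ, ((χ g : Rˣ) : R)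
      = ∑ χ : Γ →* Rˣ, ((χ g : Rˣ) : R) := by
    rw [Finset.mul_sum]
    exact Fintype.sum_equiv (Equiv.mulLeft χ₀) _ _ (fun χ => by
      simp [MonoidHom.mul_apply, Units.val_mul])
  have h2 : (((χ₀ g : Rˣ) : R) - 1) * ∑ χ : Γ →* Rˣ, ((χ g : Rˣ) : R) = 0 := by
    rw [sub_mul, one_mul, key, sub_self]
  rcases mul_eq_zero.mp h2 with h | h
  · exact absurd (Units.val_eq_one.mp (sub_eq_zero.mp h)) hχ₀
  · exact h

end GradingAux


open GradingAux

/-- If a commutative ring `A` is graded by a finite abelian group `Γ` and the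
additive group of `A` has no nonzero `#Γ`-torsion, then the nilradical of `A`
is homogeneous: the components of any nilpotent element are nilpotent. -/
theorem nilradical_homogeneous_of_torsionFree {A Γ : Type*} [CommRing A]
    [CommGroup Γ] [Fintype Γ]
    (B : Γ → AddSubgroup A) (hB : IsGrading B)
    (htf : ∀ x : A, (Fintype.card Γ) • x = 0 → x = 0) :
    ∀ f : Γ →₀ A, (∀ γ, f γ ∈ B γ) →
      IsNilpotent (f.sum fun _ x => x) → ∀ γ : Γ, IsNilpotent (f γ) := by
  classical
  intro f hf hnil γ₀
  set n := Fintype.card Γ with hn_def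
  have hn : 0 < n := Fintype.card_pos
  haveI : NeZero n := ⟨hn.ne'⟩
  set q : Polynomial ℤ := Polynomial.cyclotomic n ℤ with hq
  haveI hdom : IsDomain (AdjoinRoot q) :=
    AdjoinRoot.isDomain_of_prime ((UniqueFactorizationMonoid.irreducible_iff_prime).mp
      (Polynomial.cyclotomic.irreducible hn))
  have hmonic : q.Monic := Polynomial.cyclotomic.monic n ℤ
  set pb := AdjoinRoot.powerBasis' hmonic with hpb
  have hdim : 0 < pb.dim := by
    show 0 < q.natDegree
    rw [hq, Polynomial.natDegree_cyclotomic]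
    exact Nat.totient_pos.mpr hn
  set i0 : Fin pb.dim := ⟨0, hdim⟩ with hi0
  set l : AdjoinRoot q →ₗ[ℤ] ℤ := pb.basis.coord i0 with hl
  have l_one : l 1 = 1 := by
    have hb : pb.basis i0 = 1 := by
      rw [PowerBasis.coe_basis]
      exact pow_zero _
    rw [← hb, hl, Module.Basis.coord_apply, Module.Basis.repr_self, Finsupp.single_eq_same]
  have l_cast : ∀ m : ℤ, l ((m : ℤ) : AdjoinRoot q) = m := by
    intro m
    have : ((m : ℤ) : AdjoinRoot q) = m • (1 : AdjoinRoot q) := by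
      rw [zsmul_eq_mul, mul_one]
    rw [this, map_zsmul, l_one, smul_eq_mul, mul_one]
  have hinj : Function.Injective (algebraMap ℤ (AdjoinRoot q)) := by
    intro x y hxy
    have := congrArg l hxy
    rwa [eq_intCast, eq_intCast, l_cast, l_cast] at this
  haveI : CharZero (AdjoinRoot q) := charZero_of_injective_algebraMap hinj
  haveI : NeZero ((n : ℕ) : AdjoinRoot q) := ⟨Nat.cast_ne_zero.mpr hn.ne'⟩
  have hroot : (Polynomial.cyclotomic n (AdjoinRoot q)).IsRoot (AdjoinRoot.root q) := by
    have h := AdjoinRoot.isRoot_root q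
    rwa [hq, Polynomial.map_cyclotomic] at h
  have hζ : IsPrimitiveRoot (AdjoinRoot.root q) n :=
    Polynomial.isRoot_cyclotomic_iff.mp hroot
  haveI hE : HasEnoughRootsOfUnity (AdjoinRoot q) n := ⟨⟨_, hζ⟩, inferInstance⟩
  haveI : HasEnoughRootsOfUnity (AdjoinRoot q) (Monoid.exponent Γ) :=
    HasEnoughRootsOfUnity.of_dvd (AdjoinRoot q) Group.exponent_dvd_card
  obtain ⟨e⟩ := CommGroup.monoidHom_mulEquiv_of_hasEnoughRootsOfUnity Γ (AdjoinRoot q)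
  haveI : Fintype (Γ →* (AdjoinRoot q)ˣ) := Fintype.ofEquiv Γ e.toEquiv.symm
  have hcard : Fintype.card (Γ →* (AdjoinRoot q)ˣ) = n := Fintype.card_congr e.toEquiv
  -- the decomposition of α is f
  set α := f.sum fun _ x => x with hα
  have hdα : d hB α = f := d_eq hB hf rfl
  have hFα : ∀ χ : Γ →* (AdjoinRoot q)ˣ, F (AdjoinRoot q) hB χ α
      = f.sum fun γ x => x ⊗ₜ[ℤ] ((χ γ : (AdjoinRoot q)ˣ) : AdjoinRoot q) := fun χ => by
    rw [F, hdα]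
  obtain ⟨m, hm⟩ := hnil
  have hα1 : α ^ (m + 1) = 0 := by rw [pow_succ, hm, zero_mul]
  have hFnil : ∀ χ : Γ →* (AdjoinRoot q)ˣ, (F (AdjoinRoot q) hB χ α) ^ (m + 1) = 0 := fun χ => by
    rw [← F_pow, hα1, F_zero]
  set S := ∑ χ : Γ →* (AdjoinRoot q)ˣ,
    (((1 : A) ⊗ₜ[ℤ] (((χ γ₀)⁻¹ : (AdjoinRoot q)ˣ) : AdjoinRoot q)) * F (AdjoinRoot q) hB χ α)
    with hS_def
  have hSnil : IsNilpotent S :=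
    isNilpotent_sum fun χ _ => ⟨m + 1, by rw [mul_pow, hFnil, mul_zero]⟩
  have step1 : ∀ χ : Γ →* (AdjoinRoot q)ˣ,
      ((1 : A) ⊗ₜ[ℤ] (((χ γ₀)⁻¹ : (AdjoinRoot q)ˣ) : AdjoinRoot q)) * F (AdjoinRoot q) hB χ α
      = ∑ γ : Γ, f γ ⊗ₜ[ℤ] ((((χ γ₀)⁻¹ * χ γ : (AdjoinRoot q)ˣ)) : AdjoinRoot q) := by
    intro χ
    rw [hFα, Finsupp.sum_fintype _ _ (fun γ => by rw [TensorProduct.zero_tmul]), Finset.mul_sum]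
    exact Finset.sum_congr rfl fun γ _ => by
      rw [Algebra.TensorProduct.tmul_mul_tmul, one_mul, Units.val_mul]
  have step2 : ∀ γ : Γ, (∑ χ : Γ →* (AdjoinRoot q)ˣ,
      ((((χ γ₀)⁻¹ * χ γ : (AdjoinRoot q)ˣ)) : AdjoinRoot q))
      = if γ = γ₀ then ((n : ℕ) : AdjoinRoot q) else 0 := by
    intro γ
    have hre : ∀ χ : Γ →* (AdjoinRoot q)ˣ,
        ((((χ γ₀)⁻¹ * χ γ : (AdjoinRoot q)ˣ)) : AdjoinRoot q)
        = ((χ (γ₀⁻¹ * γ) : (AdjoinRoot q)ˣ) : AdjoinRoot q) := fun χ => by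
      rw [map_mul, map_inv]
    simp only [hre]
    by_cases h : γ = γ₀
    · rw [if_pos h, h, inv_mul_cancel]
      exact sum_char_eq_card hcard
    · rw [if_neg h]
      refine sum_char_eq_zero (CommGroup.exists_apply_ne_one_of_hasEnoughRootsOfUnity Γ
        (AdjoinRoot q) ?_)
      intro heq
      exact h (inv_mul_eq_one.mp heq).symm
  have hS : S = f γ₀ ⊗ₜ[ℤ] ((n : ℕ) : AdjoinRoot q) := by
    rw [hS_def]
    calc (∑ χ : Γ →* (AdjoinRoot q)ˣ,
          (((1 : A) ⊗ₜ[ℤ] (((χ γ₀)⁻¹ : (AdjoinRoot q)ˣ) : AdjoinRoot q))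
            * F (AdjoinRoot q) hB χ α))
        = ∑ χ : Γ →* (AdjoinRoot q)ˣ, ∑ γ : Γ,
            f γ ⊗ₜ[ℤ] ((((χ γ₀)⁻¹ * χ γ : (AdjoinRoot q)ˣ)) : AdjoinRoot q) :=
          Finset.sum_congr rfl fun χ _ => step1 χ
      _ = ∑ γ : Γ, ∑ χ : Γ →* (AdjoinRoot q)ˣ,
            f γ ⊗ₜ[ℤ] ((((χ γ₀)⁻¹ * χ γ : (AdjoinRoot q)ˣ)) : AdjoinRoot q) :=
          Finset.sum_comm
      _ = ∑ γ : Γ, f γ ⊗ₜ[ℤ] (∑ χ : Γ →* (AdjoinRoot q)ˣ,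
            ((((χ γ₀)⁻¹ * χ γ : (AdjoinRoot q)ˣ)) : AdjoinRoot q)) :=
          Finset.sum_congr rfl fun γ _ => (TensorProduct.tmul_sum _ _ _).symm
      _ = ∑ γ : Γ, if γ = γ₀ then f γ ⊗ₜ[ℤ] ((n : ℕ) : AdjoinRoot q) else 0 := by
          refine Finset.sum_congr rfl fun γ _ => ?_
          rw [step2]
          split_ifs with h
          · rfl
          · rw [TensorProduct.tmul_zero]
      _ = f γ₀ ⊗ₜ[ℤ] ((n : ℕ) : AdjoinRoot q) := by
          rw [Finset.sum_ite_eq' Finset.univ γ₀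
            (fun γ => f γ ⊗ₜ[ℤ] ((n : ℕ) : AdjoinRoot q)), if_pos (Finset.mem_univ _)]
  -- retraction
  set ρ : A ⊗[ℤ] AdjoinRoot q →ₗ[ℤ] A :=
    TensorProduct.lift (LinearMap.flip ((LinearMap.lsmul ℤ A).comp l)) with hρ_def
  have hρ : ∀ (a : A) (r : AdjoinRoot q), ρ (a ⊗ₜ[ℤ] r) = l r • a := fun a r => by
    rw [hρ_def]; exact TensorProduct.lift.tmul a r
  obtain ⟨k, hk⟩ := hSnil
  have hk1 : S ^ (k + 1) = 0 := by rw [pow_succ, hk, zero_mul]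
  rw [hS, Algebra.TensorProduct.tmul_pow] at hk1
  have hzero : (n ^ (k + 1) : ℕ) • (f γ₀) ^ (k + 1) = 0 := by
    have h2 := congrArg ρ hk1
    rw [map_zero, hρ] at h2
    rw [show (((n : ℕ) : AdjoinRoot q)) ^ (k + 1) = (((n ^ (k + 1) : ℕ) : ℤ) : AdjoinRoot q) by
      push_cast; ring, l_cast] at h2
    rwa [natCast_zsmul] at h2
  have key : ∀ (j : ℕ) (y : A), n ^ j • y = 0 → y = 0 := by
    intro j
    induction j with
    | zero => intro y h; rwa [pow_zero, one_smul] at h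
    | succ j ih =>
      intro y h
      refine ih y (htf _ ?_)
      rw [smul_smul, ← pow_succ']
      exact h
  exact ⟨k + 1, key (k + 1) _ hzero⟩
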